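/- arXiv:1202.2561 — 7 statements merged into one kernel-verified Lean document; each statement's English description precedes it below -/
import Mathlib

section
/- For every real γ ≥ 0, the infimum of γ11 + γ21 over all pairs (γ11, γ21) of nonnegative reals satisfying r1 ≥ [1 − γ11 − [β − γ21 − b]⁺]⁺ equals [1 − r1 − [β − b]⁺]⁺, where [x]⁺ := max(x,0), and the parameters satisfy 0 ≤ r1 ≤ 1, 0 ≤ β ≤ 1, b ≥ 0. -/
/-- Outage exponent `d11_HK` for the first outage event at receiver 1 of the
Han–Kobayashi scheme in the Z-interference channel. -/
theorem stmt_0 (r1 β b : ℝ) (hr1 : 0 ≤ r1) (hr1' : r1 ≤ 1)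
    (hβ : 0 ≤ β) (hβ' : β ≤ 1) (hb : 0 ≤ b) :
    sInf {s : ℝ | ∃ g11 g21 : ℝ, 0 ≤ g11 ∧ 0 ≤ g21 ∧
        r1 ≥ max (1 - g11 - max (β - g21 - b) 0) 0 ∧ s = g11 + g21}
      = max (1 - r1 - max (β - b) 0) 0 := by
  set T := max (β - b) 0 with hT
  set m := max (1 - r1 - T) 0 with hm
  have hT0 : 0 ≤ T := le_max_right _ _
  have hTb : β - b ≤ T := le_max_left _ _
  have hm0 : 0 ≤ m := le_max_right _ _
  have hm1 : 1 - r1 - T ≤ m := le_max_left _ _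
  have hlb : ∀ s ∈ {s : ℝ | ∃ g11 g21 : ℝ, 0 ≤ g11 ∧ 0 ≤ g21 ∧
      r1 ≥ max (1 - g11 - max (β - g21 - b) 0) 0 ∧ s = g11 + g21}, m ≤ s := by
    rintro s ⟨g11, g21, h1, h2, h3, rfl⟩
    have h4 : 1 - g11 - max (β - g21 - b) 0 ≤ r1 := le_trans (le_max_left _ _) h3
    rcases le_or_gt (β - g21 - b) 0 with hc | hc
    · rw [max_eq_right hc] at h4
      exact max_le (by linarith) (by linarith)
    · rw [max_eq_left hc.le] at h4
      exact max_le (by linarith) (by linarith)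
  have hmem : m ∈ {s : ℝ | ∃ g11 g21 : ℝ, 0 ≤ g11 ∧ 0 ≤ g21 ∧
      r1 ≥ max (1 - g11 - max (β - g21 - b) 0) 0 ∧ s = g11 + g21} := by
    refine ⟨m, 0, hm0, le_refl 0, ?_, by ring⟩
    have : max (β - 0 - b) 0 = T := by rw [sub_zero]
    rw [this]
    exact max_le (by linarith) hr1
  exact le_antisymm (csInf_le ⟨m, hlb⟩ hmem) (le_csInf ⟨m, hmem⟩ hlb)
end

section
/- Define [x]⁺ := max(x,0), d1_CMO(r1,r2,β) := min{[1−r1]⁺, [1−r1−r2]⁺ + [β−r1−r2]⁺}, d11(b) := [1−r1−[β−b]⁺]⁺, and d12(t2,b) := [1−r1−t2]⁺ + [β−r1−t2]⁺ if b ≥ r1+t2, else [1−r1−t2−[β−b]⁺]⁺, with d1_HK(t2,b) := min{d11(b), d12(t2,b)}. If 0 ≤ r1, 0 ≤ r2, 0 ≤ t2 ≤ r2, b ≥ 0, and β ≥ r1 + 2r2, then d1_HK(t2,b) ≤ d1_CMO(r1,r2,β). -/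
/-- Part 1 of the structural lemma: for `β ≥ r1 + 2 r2`, no
Han–Kobayashi split beats the common-message-only receiver-1 diversity. -/
theorem stmt_3 (r1 r2 β t2 b : ℝ) (hr1 : 0 ≤ r1) (hr2 : 0 ≤ r2)
    (ht2 : 0 ≤ t2) (ht2' : t2 ≤ r2) (hb : 0 ≤ b) (hβ : r1 + 2 * r2 ≤ β) :
    min (max (1 - r1 - max (β - b) 0) 0)
        (if r1 + t2 ≤ b then max (1 - r1 - t2) 0 + max (β - r1 - t2) 0
         else max (1 - r1 - t2 - max (β - b) 0) 0)
      ≤ min (max (1 - r1) 0) (max (1 - r1 - r2) 0 + max (β - r1 - r2) 0) := by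
  have hm : (0:ℝ) ≤ max (β - b) 0 := le_max_right _ _
  refine le_min (le_trans (min_le_left _ _) ?_) (le_trans (min_le_left _ _) ?_)
  · exact max_le_max (by linarith) le_rfl
  · refine max_le ?_ ?_
    · have h1 := le_max_left (1 - r1 - r2) (0:ℝ)
      have h2 := le_max_left (β - r1 - r2) (0:ℝ)
      linarith
    · have h1 := le_max_right (1 - r1 - r2) (0:ℝ)
      have h2 := le_max_right (β - r1 - r2) (0:ℝ)
      linarith
end

section
/- With [x]⁺ := max(x,0), d1_CMO := min{[1−r1]⁺, [1−r1−r2]⁺ + [β−r1−r2]⁺}, d11(b) := [1−r1−[β−b]⁺]⁺, d12(t2,b) := [1−r1−t2]⁺ + [β−r1−t2]⁺ if b ≥ r1+t2 else [1−r1−t2−[β−b]⁺]⁺, and d1_HK(t2,b) := min{d11(b), d12(t2,b)}: if 0 ≤ r1 ≤ 1, 0 ≤ r2, 0 ≤ t2 ≤ r2, r1 + r2 ≤ β < r1 + 2r2, β ≤ 1, and b ≥ max{r1 + t2, 2β − (r1 + 2r2)}, then d1_HK(t2,b) ≥ d1_CMO. -/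
/-- Part 2 of the structural lemma: for `r1 + r2 ≤ β < r1 + 2 r2` and large
enough power split `b`, the Han–Kobayashi receiver-1 diversity dominates
the common-message-only one. -/
theorem stmt_4 (r1 r2 β t2 b : ℝ) (hr1 : 0 ≤ r1) (hr1' : r1 ≤ 1) (hr2 : 0 ≤ r2)
    (ht2 : 0 ≤ t2) (ht2' : t2 ≤ r2)
    (hβ1 : r1 + r2 ≤ β) (hβ2 : β < r1 + 2 * r2) (hβ3 : β ≤ 1)
    (hb : max (r1 + t2) (2 * β - (r1 + 2 * r2)) ≤ b) :
    min (max (1 - r1 - max (β - b) 0) 0)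
        (if r1 + t2 ≤ b then max (1 - r1 - t2) 0 + max (β - r1 - t2) 0
         else max (1 - r1 - t2 - max (β - b) 0) 0)
      ≥ min (max (1 - r1) 0) (max (1 - r1 - r2) 0 + max (β - r1 - r2) 0) := by
  have hb1 : r1 + t2 ≤ b := le_trans (le_max_left _ _) hb
  have hb2 : 2 * β - (r1 + 2 * r2) ≤ b := le_trans (le_max_right _ _) hb
  rw [if_pos hb1]
  have h1 : (0:ℝ) ≤ 1 - r1 - r2 := by linarith
  have h2 : (0:ℝ) ≤ β - r1 - r2 := by linarith
  have h3 : (0:ℝ) ≤ 1 - r1 - t2 := by linarith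
  have h4 : (0:ℝ) ≤ β - r1 - t2 := by linarith
  rw [max_eq_left h1, max_eq_left h2, max_eq_left h3, max_eq_left h4]
  refine le_min ?_ ?_
  · refine le_trans (min_le_right _ _) ?_
    rcases le_total (β - b) 0 with h | h
    · rw [max_eq_right h]
      exact le_trans (by linarith) (le_max_left _ _)
    · rw [max_eq_left h]
      exact le_trans (by linarith) (le_max_left _ _)
  · exact le_trans (min_le_right _ _) (by linarith)
end

section
/- With the notation d1_CMO := min{[1−r1]⁺, [1−r1−r2]⁺ + [β−r1−r2]⁺}, d11(b) := [1−r1−[β−b]⁺]⁺, d12(t2,b) := [1−r1−t2]⁺ + [β−r1−t2]⁺ if b ≥ r1+t2 else [1−r1−t2−[β−b]⁺]⁺, d1_HK := min{d11, d12}, and [x]⁺ := max(x,0): if 0 ≤ r1 ≤ 1, 0 ≤ r2 ≤ 1, 0 ≤ t2 ≤ r2, 0 ≤ β < r1 + r2, β ≤ 1, and b ≥ β − (min{r2, 1−r1} − t2), then d1_HK(t2,b) ≥ d1_CMO. -/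
/-- Part 3 of the structural lemma: for `β < r1 + r2` and
`b ≥ β − (min{r2, 1−r1} − t2)`, the Han–Kobayashi receiver-1 diversity
dominates the common-message-only one. -/
theorem stmt_5 (r1 r2 β t2 b : ℝ) (hr1 : 0 ≤ r1) (hr1' : r1 ≤ 1)
    (hr2 : 0 ≤ r2) (hr2' : r2 ≤ 1) (ht2 : 0 ≤ t2) (ht2' : t2 ≤ r2)
    (hβ0 : 0 ≤ β) (hβ1 : β < r1 + r2) (hβ3 : β ≤ 1)
    (hb : β - (min r2 (1 - r1) - t2) ≤ b) :
    min (max (1 - r1 - max (β - b) 0) 0)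
        (if r1 + t2 ≤ b then max (1 - r1 - t2) 0 + max (β - r1 - t2) 0
         else max (1 - r1 - t2 - max (β - b) 0) 0)
      ≥ min (max (1 - r1) 0) (max (1 - r1 - r2) 0 + max (β - r1 - r2) 0) := by
  have hmin : min r2 (1 - r1) ≤ r2 := min_le_left _ _
  have hmb : max (β - b) 0 ≤ r2 - t2 := max_le (by linarith) (by linarith)
  have hR : max (β - r1 - r2) 0 = 0 := max_eq_right (by linarith)
  rw [ge_iff_le, hR, add_zero,
    min_eq_right (max_le_max (by linarith : (1:ℝ) - r1 - r2 ≤ 1 - r1) le_rfl)]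
  refine le_min (max_le_max (by linarith) le_rfl) ?_
  split_ifs with h
  · exact le_add_of_le_of_nonneg (max_le_max (by linarith) le_rfl) (le_max_right _ _)
  · exact max_le_max (by linarith) le_rfl
end

section
/- Let [x]⁺ := max(x,0), fix 0 ≤ r1 ≤ 1, 0 ≤ r2 ≤ 1, 0 ≤ β ≤ 1 with r1 + r2 ≤ β < r1 + 2r2, and let D ∈ ℝ with max{[1+β−2(r1+r2)]⁺, [1−(β+2r1)/3]⁺} ≤ D ≤ [1−r1]⁺. Then the choice b* = D − 1 + r1 + β and t2* = (1 + β − 2r1 − D)/2 satisfies d1_HK(t2*, b*) ≥ D and d2_HK(t2*, b*) = (1/2)·[5 − β − 4r1 − 2r2 − 3D]⁺, where d1_HK(t2,b) := min{[1−r1−[β−b]⁺]⁺, ([1−r1−t2]⁺ + [β−r1−t2]⁺ if b ≥ r1+t2 else [1−r1−t2−[β−b]⁺]⁺)} and d2_HK(t2,b) := min{[1−r2]⁺, [1−r2−b+t2]⁺}. -/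
/-- Achievability of the sloped segment of the diversity tradeoff curve in
the regime `r1 + r2 ≤ β < r1 + 2 r2`. -/
theorem stmt_9 (r1 r2 β D : ℝ) (hr1 : 0 ≤ r1) (hr1' : r1 ≤ 1)
    (hr2 : 0 ≤ r2) (hr2' : r2 ≤ 1) (hβ0 : 0 ≤ β) (hβ3 : β ≤ 1)
    (hβ1 : r1 + r2 ≤ β) (hβ2 : β < r1 + 2 * r2)
    (hD1 : max (max (1 + β - 2 * (r1 + r2)) 0) (max (1 - (β + 2 * r1) / 3) 0) ≤ D)
    (hD2 : D ≤ max (1 - r1) 0) :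
    (fun t2 b : ℝ =>
        min (max (1 - r1 - max (β - b) 0) 0)
          (if r1 + t2 ≤ b then max (1 - r1 - t2) 0 + max (β - r1 - t2) 0
           else max (1 - r1 - t2 - max (β - b) 0) 0))
      ((1 + β - 2 * r1 - D) / 2) (D - 1 + r1 + β) ≥ D ∧
    (fun t2 b : ℝ => min (max (1 - r2) 0) (max (1 - r2 - b + t2) 0))
      ((1 + β - 2 * r1 - D) / 2) (D - 1 + r1 + β)
      = (1 / 2) * max (5 - β - 4 * r1 - 2 * r2 - 3 * D) 0 := by
  have hD0 : 0 ≤ D := le_trans (le_trans (le_max_right _ 0) (le_max_left _ _)) hD1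
  have hDb : 1 - (β + 2 * r1) / 3 ≤ D :=
    le_trans (le_trans (le_max_left _ 0) (le_max_right _ _)) hD1
  have hDr : D ≤ 1 - r1 := by
    have : max (1 - r1) 0 = 1 - r1 := max_eq_left (by linarith)
    linarith [hD2, this.symm ▸ hD2]
  simp only
  rw [if_pos (by linarith)]
  have h1 : max (β - (D - 1 + r1 + β)) 0 = 1 - r1 - D := by
    rw [max_eq_left (by linarith : (0:ℝ) ≤ β - (D - 1 + r1 + β))]; ring
  have h2 : max (1 - r1 - (1 - r1 - D)) 0 = D := by
    have : 1 - r1 - (1 - r1 - D) = D := by ring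
    rw [this, max_eq_left hD0]
  rw [h1, h2]
  constructor
  · have h3 : max (1 - r1 - (1 + β - 2 * r1 - D) / 2) 0
        = 1 - r1 - (1 + β - 2 * r1 - D) / 2 := max_eq_left (by linarith)
    rw [h3]
    rcases le_total (β - r1 - (1 + β - 2 * r1 - D) / 2) 0 with h | h
    · rw [max_eq_right h]
      have : D ≤ 1 - r1 - (1 + β - 2 * r1 - D) / 2 + 0 := by linarith
      exact le_min le_rfl this
    · rw [max_eq_left h]
      exact le_min le_rfl (by linarith)
  · have h4 : 1 - r2 - (D - 1 + r1 + β) + (1 + β - 2 * r1 - D) / 2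
        = (5 - β - 4 * r1 - 2 * r2 - 3 * D) / 2 := by ring
    rw [h4, max_eq_left (by linarith : (0:ℝ) ≤ 1 - r2)]
    rcases le_total (5 - β - 4 * r1 - 2 * r2 - 3 * D) 0 with h | h
    · rw [max_eq_right (by linarith : (5 - β - 4 * r1 - 2 * r2 - 3 * D) / 2 ≤ 0),
        max_eq_right h, min_eq_right (by linarith : (0:ℝ) ≤ 1 - r2)]
      ring
    · rw [max_eq_left (by linarith), max_eq_left h]
      have : (5 - β - 4 * r1 - 2 * r2 - 3 * D) / 2 ≤ 1 - r2 := by linarith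
      rw [min_eq_right this]; ring
end

section
/- Let [x]⁺ := max(x,0), fix 0 ≤ r1 ≤ 1, 0 ≤ r2 ≤ 1, 0 < β ≤ 1 with β < r1 + r2, and let D satisfy [1−r1−r2]⁺ ≤ D < [1−r1−min{r2,β}]⁺. Then the choice b* = β and t2* = 1 − r1 − D satisfies 0 ≤ t2* ≤ r2, d1_HK(t2*, b*) ≥ D, and d2_HK(t2*, b*) = [1 − max{r2, β}]⁺, where d1_HK(t2,b) := min{[1−r1−[β−b]⁺]⁺, ([1−r1−t2]⁺ + [β−r1−t2]⁺ if b ≥ r1+t2 else [1−r1−t2−[β−b]⁺]⁺)} and d2_HK(t2,b) := min{[1−r2]⁺, [1−r2−b+t2]⁺}. -/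
/-- First segment of the diversity tradeoff curve in the regime `β < r1 + r2`. -/
theorem stmt_10 (r1 r2 β D : ℝ) (hr1 : 0 ≤ r1) (hr1' : r1 ≤ 1)
    (hr2 : 0 ≤ r2) (hr2' : r2 ≤ 1) (hβ0 : 0 < β) (hβ3 : β ≤ 1)
    (hβ1 : β < r1 + r2)
    (hD1 : max (1 - r1 - r2) 0 ≤ D) (hD2 : D < max (1 - r1 - min r2 β) 0) :
    0 ≤ 1 - r1 - D ∧ 1 - r1 - D ≤ r2 ∧
    (fun t2 b : ℝ =>
        min (max (1 - r1 - max (β - b) 0) 0)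
          (if r1 + t2 ≤ b then max (1 - r1 - t2) 0 + max (β - r1 - t2) 0
           else max (1 - r1 - t2 - max (β - b) 0) 0))
      (1 - r1 - D) β ≥ D ∧
    (fun t2 b : ℝ => min (max (1 - r2) 0) (max (1 - r2 - b + t2) 0))
      (1 - r1 - D) β = max (1 - max r2 β) 0 := by
  have hD0 : 0 ≤ D := le_trans (le_max_right _ _) hD1
  have hDr : 1 - r1 - r2 ≤ D := le_trans (le_max_left _ _) hD1
  have hc : β < r2 := by
    by_contra h
    push_neg at h
    rw [min_eq_left h] at hD2
    exact absurd (lt_of_le_of_lt hD1 hD2) (lt_irrefl _)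
  rw [min_eq_right hc.le] at hD2
  have hDlt : D < 1 - r1 - β := (lt_max_iff.mp hD2).resolve_right (not_lt.mpr hD0)
  simp only [sub_self, max_self, max_eq_left (le_refl (0:ℝ)), sub_zero]
  refine ⟨by linarith, by linarith, ?_, ?_⟩
  · have h1 : max (1 - r1) 0 = 1 - r1 := max_eq_left (by linarith)
    rw [h1]
    have h2 : max (1 - r1 - (1 - r1 - D)) 0 = D := by
      rw [show 1 - r1 - (1 - r1 - D) = D by ring]; exact max_eq_left hD0
    split_ifs with h
    · rw [h2]
      have := le_max_right (β - r1 - (1 - r1 - D)) 0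
      exact le_min (by linarith) (by linarith)
    · rw [h2]
      exact le_min (by linarith) le_rfl
  · rw [max_eq_left hc.le, max_eq_left (by linarith : (0:ℝ) ≤ 1 - r2)]
    rw [min_eq_left]
    have : 1 - r2 ≤ 1 - r2 - β + (1 - r1 - D) := by linarith
    exact le_trans this (le_max_left _ _)
end

section
/- Let [x]⁺ := max(x,0), fix 0 ≤ r1 ≤ 1, 0 ≤ r2 ≤ 1, 0 ≤ β ≤ 1 with r1 + r2 ≤ β < r1 + 2r2, and let t2, b satisfy 0 ≤ t2 ≤ r2 and b ≥ max{r1 + t2, 2β − (r1 + 2r2)}. If d1_HK(t2,b) ≥ max{[1+β−2(r1+r2)]⁺, [1−(β+2r1)/3]⁺}, then d2_HK(t2,b) ≤ (1/2)[5 − β − 4r1 − 2r2 − 3·d1_HK(t2,b)]⁺, where d1_HK(t2,b) := min{[1−r1−[β−b]⁺]⁺, ([1−r1−t2]⁺ + [β−r1−t2]⁺ if b ≥ r1+t2 else [1−r1−t2−[β−b]⁺]⁺)} and d2_HK(t2,b) := min{[1−r2]⁺, [1−r2−b+t2]⁺}. -/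
/-- Converse part of the tradeoff theorem on the sloped segment in the
regime `r1 + r2 ≤ β < r1 + 2 r2`. -/
theorem stmt_19 (r1 r2 β t2 b : ℝ) (hr1 : 0 ≤ r1) (hr1' : r1 ≤ 1)
    (hr2 : 0 ≤ r2) (hr2' : r2 ≤ 1) (hβ0 : 0 ≤ β) (hβ3 : β ≤ 1)
    (hβ1 : r1 + r2 ≤ β) (hβ2 : β < r1 + 2 * r2)
    (ht2 : 0 ≤ t2) (ht2' : t2 ≤ r2)
    (hb : max (r1 + t2) (2 * β - (r1 + 2 * r2)) ≤ b)
    (hD : min (max (1 - r1 - max (β - b) 0) 0)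
          (if r1 + t2 ≤ b then max (1 - r1 - t2) 0 + max (β - r1 - t2) 0
           else max (1 - r1 - t2 - max (β - b) 0) 0)
        ≥ max (max (1 + β - 2 * (r1 + r2)) 0) (max (1 - (β + 2 * r1) / 3) 0)) :
    min (max (1 - r2) 0) (max (1 - r2 - b + t2) 0)
      ≤ (1 / 2) * max (5 - β - 4 * r1 - 2 * r2 - 3 *
          (min (max (1 - r1 - max (β - b) 0) 0)
            (if r1 + t2 ≤ b then max (1 - r1 - t2) 0 + max (β - r1 - t2) 0
             else max (1 - r1 - t2 - max (β - b) 0) 0))) 0 := by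
  have hbt : r1 + t2 ≤ b := le_trans (le_max_left _ _) hb
  rw [if_pos hbt] at hD ⊢
  set A : ℝ := max (β - b) 0 with hA
  have hA1 : β - b ≤ A := le_max_left _ _
  have hA0 : 0 ≤ A := le_max_right _ _
  set d1 : ℝ := min (max (1 - r1 - A) 0) (max (1 - r1 - t2) 0 + max (β - r1 - t2) 0)
    with hd1
  have hd1nn : 0 ≤ d1 := le_min (le_max_right _ _)
    (add_nonneg (le_max_right _ _) (le_max_right _ _))
  -- key bound : 3 d1 ≤ 3 - β - 4 r1 + 2 b - 2 t2
  have hkey : 3 * d1 ≤ 3 - β - 4 * r1 + 2 * b - 2 * t2 := by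
    rcases le_or_gt (1 - r1 - A) 0 with h | h
    · have : d1 ≤ 0 := le_trans (min_le_left _ _) (by rw [max_eq_right h])
      linarith
    · have h1 : d1 ≤ 1 - r1 - A := le_trans (min_le_left _ _) (le_of_eq (max_eq_left h.le))
      have h2 : max (1 - r1 - t2) 0 = 1 - r1 - t2 := max_eq_left (by linarith)
      have h3 : max (β - r1 - t2) 0 = β - r1 - t2 := max_eq_left (by linarith)
      have h4 : d1 ≤ (1 - r1 - t2) + (β - r1 - t2) := by
        rw [hd1, h2, h3]; exact min_le_right _ _
      linarith
  have hR0 : 0 ≤ max (5 - β - 4 * r1 - 2 * r2 - 3 * d1) 0 := le_max_right _ _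
  rcases le_or_gt (1 - r2 - b + t2) 0 with h | h
  · have : min (max (1 - r2) 0) (max (1 - r2 - b + t2) 0) ≤ 0 := by
      refine le_trans (min_le_right _ _) (le_of_eq (max_eq_right h))
    linarith
  · have hL : min (max (1 - r2) 0) (max (1 - r2 - b + t2) 0) ≤ 1 - r2 - b + t2 := by
      refine le_trans (min_le_right _ _) (le_of_eq (max_eq_left h.le))
    have : 5 - β - 4 * r1 - 2 * r2 - 3 * d1 ≤ max (5 - β - 4 * r1 - 2 * r2 - 3 * d1) 0 :=
      le_max_left _ _
    linarith
end
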